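/- Let M be a residually finite monoid and A a finite set. Then every injective cellular automaton τ : A^M → A^M is surjective (i.e., M is surjunctive). -/

import Mathlib

/-- The prodiscrete uniform structure on `M → A` (product of discrete uniformities). -/
def prodiscrete (M A : Type*) : UniformSpace (M → A) :=
  @Pi.uniformSpace M (fun _ => A) (fun _ => ⊥)

theorem residually_finite_monoid_is_surjunctive
    {M : Type*} [Monoid M] {A : Type*} [Finite A]
    (hres : ∀ m m' : M, m ≠ m' →
      ∃ (N : Type) (instN : Monoid N), Finite N ∧
        ∃ φ : @MonoidHom M N _ instN.toMulOneClass.toMulOne, φ m ≠ φ m')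
    (τ : (M → A) → (M → A))
    (hequiv : ∀ (m : M) (x : M → A), τ (fun u => x (u * m)) = fun u => τ x (u * m))
    (huc : @UniformContinuous _ _ (prodiscrete M A) (prodiscrete M A) τ)
    (hinj : Function.Injective τ) :
    Function.Surjective τ := by
  classical
  rcases isEmpty_or_nonempty M with hM | hM
  · intro y; exact ⟨y, Subsingleton.elim _ _⟩
  rcases isEmpty_or_nonempty A with hA | hA
  · intro y; exact (hA.false (y (Classical.arbitrary M))).elim
  letI uA : UniformSpace A := ⊥
  haveI : DiscreteTopology A := ⟨rfl⟩
  have huc' : UniformContinuous τ := huc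
  have hcont : Continuous τ := huc'.continuous
  intro y
  have hclosed : IsClosed (Set.range τ) := (isCompact_range hcont).isClosed
  have hmem : y ∈ closure (Set.range τ) := by
    rw [mem_closure_iff_nhds]
    intro U hU
    rw [nhds_pi] at hU
    simp only [nhds_discrete] at hU
    obtain ⟨I, hIfin, s, hs, hsub⟩ := Filter.mem_pi.mp hU
    -- separate points of I by a hom to a finite monoid
    have hsep : ∀ p : M × M, ∃ (N : Type) (instN : Monoid N), Finite N ∧
        ∃ φ : @MonoidHom M N _ instN.toMulOneClass.toMulOne, (p.1 ≠ p.2 → φ p.1 ≠ φ p.2) := by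
      intro p
      by_cases h : p.1 = p.2
      · exact ⟨PUnit, inferInstance, inferInstance, 1, fun hc => absurd h hc⟩
      · obtain ⟨N, iN, fN, φ, hφ⟩ := hres _ _ h
        exact ⟨N, iN, fN, φ, fun _ => hφ⟩
    choose Nf iNf fNf φf hφf using hsep
    let F : Finset M := hIfin.toFinset
    let ι : Type _ := {p : M × M // p ∈ F ×ˢ F}
    haveI : Finite ι := inferInstance
    letI instNp : ∀ p : ι, Monoid (Nf p.1) := fun p => iNf p.1
    haveI : ∀ p : ι, Finite (Nf p.1) := fun p => fNf p.1
    let NN := ∀ p : ι, Nf p.1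
    let Φ : M →* NN :=
      { toFun := fun m p => φf p.1 m
        map_one' := funext fun p => map_one (φf p.1)
        map_mul' := fun a b => funext fun p => map_mul (φf p.1) a b }
    have hΦinj : ∀ u ∈ I, ∀ v ∈ I, Φ u = Φ v → u = v := by
      intro u hu v hv h
      by_contra hne
      have hp : (u, v) ∈ F ×ˢ F := by
        simp only [Finset.mem_product, F, Set.Finite.mem_toFinset]
        exact ⟨hu, hv⟩
      exact hφf (u, v) hne (congrFun h ⟨(u, v), hp⟩)
    -- the set of Φ-invariant configurations
    set Fix : Set (M → A) := {x : M → A | ∀ u v, Φ u = Φ v → x u = x v} with hFixdef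
    -- Fix is finite
    have hFixFin : Fix.Finite := by
      apply (Set.finite_range (fun z : NN → A => z ∘ Φ)).subset
      intro x hx
      refine ⟨fun n => if h : ∃ m, Φ m = n then x h.choose else x (Classical.arbitrary M), ?_⟩
      funext m
      have h : ∃ m', Φ m' = Φ m := ⟨m, rfl⟩
      simp only [Function.comp_apply, dif_pos h]
      exact hx _ _ h.choose_spec
    -- τ maps Fix into Fix
    have hmaps : ∀ x ∈ Fix, τ x ∈ Fix := by
      intro x hx u v huv
      have h1 : (fun w => x (w * u)) = (fun w => x (w * v)) := by
        funext w
        exact hx _ _ (by simp only [map_mul, huv])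
      have h2 := congrFun (hequiv u x) 1
      have h3 := congrFun (hequiv v x) 1
      rw [one_mul] at h2 h3
      rw [← h2, ← h3, h1]
    -- τ restricted to Fix is surjective
    have hsurj : ∀ x₀ ∈ Fix, ∃ w ∈ Fix, τ w = x₀ := by
      haveI : Finite ↥Fix := hFixFin.to_subtype
      intro x₀ hx₀
      let T : ↥Fix → ↥Fix := fun x => ⟨τ x, hmaps x x.2⟩
      have hTinj : Function.Injective T := fun a b h =>
        Subtype.ext (hinj (congrArg Subtype.val h))
      obtain ⟨w, hw⟩ := (Finite.injective_iff_surjective.mp hTinj) ⟨x₀, hx₀⟩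
      exact ⟨w, w.2, congrArg Subtype.val hw⟩
    -- build the target configuration
    let z : NN → A := fun n => if h : ∃ m ∈ I, Φ m = n then y h.choose else y (Classical.arbitrary M)
    let x₀ : M → A := fun m => z (Φ m)
    have hx₀Fix : x₀ ∈ Fix := fun u v huv => by simp only [x₀, huv]
    have hx₀y : ∀ i ∈ I, x₀ i = y i := by
      intro i hi
      have h : ∃ m ∈ I, Φ m = Φ i := ⟨i, hi, rfl⟩
      have := h.choose_spec
      simp only [x₀, z, dif_pos h]
      rw [hΦinj _ this.1 _ hi this.2]
    obtain ⟨w, _, hw⟩ := hsurj x₀ hx₀Fix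
    refine ⟨x₀, ?_, ⟨w, hw⟩⟩
    apply hsub
    intro i hi
    rw [hx₀y i hi]
    exact hs i
  rw [hclosed.closure_eq] at hmem
  exact hmem
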